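/- arXiv:2406.12322 — 2 statements merged into one kernel-verified Lean document; each statement's English description precedes it below -/
import Mathlib

section
/- Let $u_1, \dots, u_n$ be elements of the free group $F_2 = F(a,b)$ such that in the reduced form of each $u_i$, every occurrence of the generator $a$ has exponent of absolute value at most $1$. Then in the cyclic reduction of the product $u_1 u_2 \cdots u_n$, viewed as a cyclic word, every maximal block of $a$'s has exponent of absolute value at most $n+1$. -/
open FreeGroup List

abbrev F2 := FreeGroup (Fin 2)

/-- The generator `a` of `F₂`. -/
def ga : F2 := FreeGroup.of 0

/-- The generator `b` of `F₂`. -/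
def gb : F2 := FreeGroup.of 1

/-- `v` contains a block `x^{±k}`: `k` consecutive occurrences of the letter `x`
with the same sign, as a contiguous subword of the reduced word of `v`.
Thus "every `x`-exponent of `v` has absolute value `≤ n`" is `¬ HasBlock x (n+1) v`. -/
def HasBlock (x : Fin 2) (k : ℕ) (v : F2) : Prop :=
  (List.replicate k (x, true)) <:+: v.toWord ∨ (List.replicate k (x, false)) <:+: v.toWord

/-- A reduced word is cyclically reduced if its last letter is not
the inverse of its first letter. -/
def CyclicallyReduced (l : List (Fin 2 × Bool)) : Prop :=
  ∀ p ∈ l.head?, ∀ q ∈ l.getLast?, q ≠ (p.1, !p.2)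

/-- `(x, y)` is a basis of `F₂`: the image of `(a, b)` under an automorphism. -/
def IsBasis (x y : F2) : Prop := ∃ φ : F2 ≃* F2, φ ga = x ∧ φ gb = y

namespace OneAtATime

variable {α : Type*} [DecidableEq α] {β : Type*}

/-- cyclically reduced, generic version -/
def CR (l : List (α × Bool)) : Prop :=
  ∀ p ∈ l.head?, ∀ q ∈ l.getLast?, q ≠ (p.1, !p.2)

/-- reduced words -/
def IsRed (w : List (α × Bool)) : Prop := w.Chain' (fun a b => b ≠ (a.1, !a.2))

omit [DecidableEq α] in
lemma flip_eq_comm {a b : α × Bool} : b = (a.1, !a.2) ↔ a = (b.1, !b.2) := by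
  constructor <;> (rintro rfl; simp)

omit [DecidableEq α] in
lemma flip_ne_self (x : α × Bool) : x ≠ (x.1, !x.2) := by
  intro h; have := congrArg Prod.snd h; simp at this

omit [DecidableEq α] in
lemma invRev_cons (a : α × Bool) (l : List (α × Bool)) :
    invRev (a :: l) = invRev l ++ [(a.1, !a.2)] := by simp [invRev]

omit [DecidableEq α] in
lemma invRev_singleton (a : α × Bool) : invRev [a] = [(a.1, !a.2)] := by simp [invRev]

lemma isRed_reduce (w : List (α × Bool)) : IsRed (reduce w) := by
  induction w with
  | nil => simp [IsRed, List.Chain']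
  | cons x w ih =>
    rw [reduce.cons]
    rcases hr : reduce w with _ | ⟨hd, tl⟩
    · simp [IsRed, List.Chain']
    · rw [hr] at ih
      by_cases hc : x.1 = hd.1 ∧ x.2 = !hd.2
      · simp only [hc, if_true]
        exact ih.tail
      · simp only [hc, if_false]
        refine List.isChain_cons.2 ⟨?_, ih⟩
        intro y hy
        simp only [head?_cons, Option.mem_def, Option.some.injEq] at hy
        subst hy
        intro he
        rw [flip_eq_comm] at he
        exact hc ⟨by rw [he], by rw [he]⟩

lemma reduce_eq_self {w : List (α × Bool)} (h : IsRed w) : reduce w = w := by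
  induction w with
  | nil => rfl
  | cons x w ih =>
    rw [reduce.cons, ih (List.isChain_cons.1 h).2]
    rcases hw : w with _ | ⟨hd, tl⟩
    · rfl
    · have hx : hd ≠ (x.1, !x.2) := by
        have := (List.isChain_cons.1 h).1 hd
        simp [hw] at this; exact this
      have : ¬ (x.1 = hd.1 ∧ x.2 = !hd.2) := by
        intro ⟨h1, h2⟩
        exact hx (by rw [flip_eq_comm]; exact Prod.ext h1 h2)
      simp [this]

lemma isRed_toWord (x : FreeGroup α) : IsRed x.toWord := by
  rw [← reduce_toWord]; exact isRed_reduce _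

lemma toWord_mk_eq {W : List (α × Bool)} (h : IsRed W) : (mk W).toWord = W := by
  rw [toWord_mk, reduce_eq_self h]

lemma mk_cancel_front (x : α × Bool) (L : List (α × Bool)) :
    mk (x :: (x.1, !x.2) :: L) = mk L :=
  Quot.sound (@Red.Step.not α [] L x.1 x.2)

lemma mk_cancel_back (x : α × Bool) (L : List (α × Bool)) :
    mk (L ++ [x, (x.1, !x.2)]) = mk L := by
  have h : FreeGroup.mk (L ++ (x.1, x.2) :: (x.1, !x.2) :: []) = mk (L ++ []) :=
    Quot.sound (@Red.Step.not α L [] x.1 x.2)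
  simpa using h

/-! ### counting nonempty pieces -/

/-- number of nonempty pieces -/
def N (L : List (List β)) : ℕ := L.countP (fun l => !l.isEmpty)

lemma N_nil : N ([] : List (List β)) = 0 := rfl

lemma N_cons_nil (L : List (List β)) : N ([] :: L) = N L := by simp [N, countP_cons]

lemma N_cons_ne {p : List β} (hp : p ≠ []) (L : List (List β)) : N (p :: L) = N L + 1 := by
  simp [N, countP_cons, hp]

lemma N_le_cons (p : List β) (L : List (List β)) : N L ≤ N (p :: L) := by
  by_cases hp : p = []
  · subst hp; rw [N_cons_nil]
  · rw [N_cons_ne hp]; omega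

lemma N_cons_le (p : List β) (L : List (List β)) : N (p :: L) ≤ N L + 1 := by
  by_cases hp : p = []
  · subst hp; rw [N_cons_nil]; omega
  · rw [N_cons_ne hp]

lemma N_append (L₁ L₂ : List (List β)) : N (L₁ ++ L₂) = N L₁ + N L₂ :=
  countP_append

lemma hkey {p X r : List β} {L : List (List β)} (_hp : p = X ++ r)
    (hX0 : X ≠ [] → p ≠ []) (hr0 : r ≠ [] → p ≠ []) :
    N [X] + N (r :: L) ≤ N (p :: L) + 1 ∧ N [X] ≤ N (p :: L) ∧ N (r :: L) ≤ N (p :: L) := by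
  by_cases hX : X = []
  · have e1 : N [X] = 0 := by simp [hX, N_cons_nil, N_nil]
    by_cases hr2 : r = []
    · have e2 : N (r :: L) = N L := by rw [hr2, N_cons_nil]
      have e3 := N_le_cons p L
      omega
    · have e2 : N (r :: L) = N L + 1 := N_cons_ne hr2 L
      have e3 : N (p :: L) = N L + 1 := N_cons_ne (hr0 hr2) L
      omega
  · have e1 : N [X] = 1 := by rw [N_cons_ne hX]; simp [N_nil]
    have e3 : N (p :: L) = N L + 1 := N_cons_ne (hX0 hX) L
    by_cases hr2 : r = []
    · have e2 : N (r :: L) = N L := by rw [hr2, N_cons_nil]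
      omega
    · have e2 : N (r :: L) = N L + 1 := N_cons_ne hr2 L
      omega

/-- Splitting a flatten along an append, controlling nonempty piece counts. -/
lemma split_flatten : ∀ (L : List (List β)) (X Y : List β), L.flatten = X ++ Y →
    ∃ LX LY : List (List β), X = LX.flatten ∧ Y = LY.flatten ∧
      (∀ q ∈ LX ++ LY, ∃ p ∈ L, q <:+: p) ∧
      N LX + N LY ≤ N L + 1 ∧ N LX ≤ N L ∧ N LY ≤ N L := by
  intro L
  induction L with
  | nil =>
    intro X Y h
    simp only [flatten_nil] at h
    obtain ⟨hX, hY⟩ := (List.append_eq_nil_iff).1 h.symm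
    exact ⟨[], [], by simp [hX], by simp [hY], by simp, by simp [N_nil],
      by simp [N_nil], by simp [N_nil]⟩
  | cons p L ih =>
    intro X Y h
    rw [flatten_cons] at h
    rcases List.append_eq_append_iff.1 h with ⟨r, hX, hL⟩ | ⟨r, hp, hY⟩
    · -- X = p ++ r, L.flatten = r ++ Y
      obtain ⟨LX', LY, h1, h2, h3, h4, h5, h6⟩ := ih r Y hL
      refine ⟨p :: LX', LY, by simp [hX, h1], h2, ?_, ?_, ?_, ?_⟩
      · intro q hq
        simp only [cons_append, mem_cons] at hq
        rcases hq with rfl | hq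
        · exact ⟨q, mem_cons_self, infix_refl _⟩
        · obtain ⟨w, hw, hqw⟩ := h3 q hq
          exact ⟨w, mem_cons_of_mem _ hw, hqw⟩
      · have := N_cons_le p LX'; have := N_cons_le p L; have := N_le_cons p L
        by_cases hp0 : p = []
        · subst hp0; rw [N_cons_nil, N_cons_nil]; omega
        · rw [N_cons_ne hp0, N_cons_ne hp0]; omega
      · by_cases hp0 : p = []
        · subst hp0; rw [N_cons_nil, N_cons_nil]; omega
        · rw [N_cons_ne hp0, N_cons_ne hp0]; omega
      · have := N_le_cons p L; omega
    · -- p = X ++ r, Y = r ++ L.flatten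
      refine ⟨[X], r :: L, by simp, by simp [hY], ?_, ?_, ?_, ?_⟩
      · intro q hq
        simp only [singleton_append, mem_cons] at hq
        rcases hq with rfl | hq
        · exact ⟨p, mem_cons_self, ⟨[], r, by simp [hp]⟩⟩
        rcases hq with rfl | hq
        · exact ⟨p, mem_cons_self, ⟨X, [], by simp [hp]⟩⟩
        · exact ⟨q, mem_cons_of_mem _ hq, infix_refl _⟩
      all_goals {
        have hX0 : X ≠ [] → p ≠ [] := by
          intro hne he; rw [he] at hp
          exact hne ((append_eq_nil_iff.1 hp.symm).1)
        have hr0 : r ≠ [] → p ≠ [] := by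
          intro hne he; rw [he] at hp
          exact hne ((append_eq_nil_iff.1 hp.symm).2)
        first
        | exact (hkey hp hX0 hr0).1
        | exact (hkey hp hX0 hr0).2.1
        | exact (hkey hp hX0 hr0).2.2 }

/-- A monochromatic block in a flatten is bounded by the number of nonempty pieces,
provided each piece has blocks of length ≤ 1. -/
lemma block_le_N (x : β) : ∀ (L : List (List β)),
    (∀ q ∈ L, ∀ j, List.replicate j x <:+: q → j ≤ 1) →
    ∀ m, List.replicate m x <:+: L.flatten → m ≤ N L := by
  intro L
  induction L with
  | nil =>
    intro _ m hm
    simp only [flatten_nil, infix_nil] at hm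
    simp only [List.replicate_eq_nil_iff] at hm
    simp [hm, N_nil]
  | cons p L ih =>
    intro hL m hm
    obtain ⟨s, t, hst⟩ := hm
    rw [flatten_cons, append_assoc] at hst
    rcases List.append_eq_append_iff.1 hst with ⟨a', hp, hrest⟩ | ⟨c', hs, hfl⟩
    · rcases List.append_eq_append_iff.1 hrest with ⟨z, ha', ht⟩ | ⟨z, hrep, hfl⟩
      · -- a' = replicate m x ++ z : block inside p
        have h1 : m ≤ 1 := by
          refine hL p (mem_cons_self) m ⟨s, z, ?_⟩
          rw [hp, ha', append_assoc]
        by_cases hm0 : m = 0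
        · omega
        · have hlenp : s.length + (m + z.length) = p.length := by
            rw [hp, ha']; simp
          have hpn : p ≠ [] := by
            intro he; rw [he] at hlenp; simp at hlenp; omega
          rw [N_cons_ne hpn]; omega
      · -- replicate m x = a' ++ z, L.flatten = z ++ t
        have hrrep : a' = List.replicate a'.length x := by
          refine eq_replicate_of_mem fun b hb => eq_of_mem_replicate (n := m) ?_
          rw [hrep]; exact mem_append_left _ hb
        have hzrep : z = List.replicate z.length x := by
          refine eq_replicate_of_mem fun b hb => eq_of_mem_replicate (n := m) ?_
          rw [hrep]; exact mem_append_right _ hb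
        have hlen : m = a'.length + z.length := by
          have := congrArg List.length hrep; simpa using this
        have h1 : a'.length ≤ 1 := by
          refine hL p (mem_cons_self) _ ?_
          rw [← hrrep]; exact ⟨s, [], by simp [hp]⟩
        have h2 : z.length ≤ N L := by
          refine ih (fun q hq => hL q (mem_cons_of_mem _ hq)) _ ?_
          rw [← hzrep]; exact ⟨[], t, by simp [hfl]⟩
        by_cases hp0 : p = []
        · have : a' = [] := by
            rw [hp0] at hp; exact (append_eq_nil_iff.1 hp.symm).2
          rw [this] at hlen
          simp at hlen
          have := N_le_cons p L; omega
        · rw [N_cons_ne hp0]; omega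
    · -- s = p ++ c', L.flatten = c' ++ (replicate m x ++ t)
      have : m ≤ N L := by
        refine ih (fun q hq => hL q (mem_cons_of_mem _ hq)) _ ⟨c', t, ?_⟩
        rw [hfl, append_assoc]
      have := N_le_cons p L; omega

/-! ### products of reduced words -/

lemma reduce_append : ∀ (w1 w2 : List (α × Bool)), IsRed w1 → IsRed w2 →
    ∃ p q, p <+: w1 ∧ q <:+ w2 ∧ reduce (w1 ++ w2) = p ++ q := by
  intro w1
  induction w1 using List.reverseRecOn with
  | nil =>
    intro w2 _ h2
    exact ⟨[], w2, prefix_refl _, suffix_refl _, by simpa using reduce_eq_self h2⟩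
  | append_singleton w1' x ih =>
    intro w2 h1 h2
    rcases w2 with _ | ⟨y, w2'⟩
    · exact ⟨w1' ++ [x], [], prefix_refl _, suffix_refl _, by
        simpa using reduce_eq_self h1⟩
    · by_cases hc : y = (x.1, !x.2)
      · -- cancel
        have hstep : Red.Step ((w1' ++ [x]) ++ y :: w2') (w1' ++ w2') := by
          subst hc
          have he : (w1' ++ [x]) ++ (x.1, !x.2) :: w2'
              = w1' ++ (x.1, x.2) :: (x.1, !x.2) :: w2' := by simp
          rw [he]
          exact Red.Step.not
        have hred : reduce ((w1' ++ [x]) ++ y :: w2') = reduce (w1' ++ w2') :=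
          reduce.Step.eq hstep
        obtain ⟨p, q, hp, hq, heq⟩ := ih w2' (h1.prefix (prefix_append _ _))
          (List.isChain_cons.1 h2).2
        exact ⟨p, q, hp.trans (prefix_append _ _), hq.trans (suffix_cons _ _),
          by rw [hred, heq]⟩
      · -- no cancellation: whole thing reduced
        have hIr : IsRed ((w1' ++ [x]) ++ y :: w2') := by
          rw [IsRed, List.Chain', List.isChain_append]
          refine ⟨h1, h2, ?_⟩
          intro a ha b hb
          rw [getLast?_concat] at ha
          simp only [Option.mem_def, Option.some.injEq] at ha
          simp only [head?_cons, Option.mem_def, Option.some.injEq] at hb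
          subst ha; subst hb
          exact hc
        exact ⟨w1' ++ [x], y :: w2', prefix_refl _, suffix_refl _,
          by rw [reduce_eq_self hIr]⟩

lemma toWord_mul_split (x y : FreeGroup α) :
    ∃ p q, p <+: x.toWord ∧ q <:+ y.toWord ∧ (x * y).toWord = p ++ q := by
  obtain ⟨p, q, hp, hq, he⟩ := reduce_append x.toWord y.toWord (isRed_toWord x) (isRed_toWord y)
  refine ⟨p, q, hp, hq, ?_⟩
  have hxy : x * y = FreeGroup.mk (x.toWord ++ y.toWord) := by
    rw [← mul_mk, mk_toWord, mk_toWord]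
  rw [hxy, toWord_mk, he]

lemma prod_structure : ∀ us : List (FreeGroup α),
    ∃ vs : List (List (α × Bool)), N vs ≤ us.length ∧
      (∀ q ∈ vs, ∃ u ∈ us, q <:+: u.toWord) ∧ us.prod.toWord = vs.flatten := by
  intro us
  induction us with
  | nil => exact ⟨[], by simp [N_nil], by simp, by simp [FreeGroup.toWord_one]⟩
  | cons u us ih =>
    obtain ⟨vs, hN, hmem, hw⟩ := ih
    obtain ⟨p, q, hp, hq, he⟩ := toWord_mul_split u us.prod
    obtain ⟨s, hs⟩ := hq
    rw [hw] at hs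
    obtain ⟨LX, LY, h1, h2, h3, _, _, h6⟩ := split_flatten vs s q hs.symm
    refine ⟨p :: LY, ?_, ?_, ?_⟩
    · have := N_cons_le p LY; simp only [length_cons]; omega
    · intro r hr
      rcases mem_cons.1 hr with rfl | hr
      · exact ⟨u, mem_cons_self, hp.isInfix⟩
      · obtain ⟨v, hv, hrv⟩ := h3 r (mem_append_right _ hr)
        obtain ⟨w, hwmem, hvw⟩ := hmem v hv
        exact ⟨w, mem_cons_of_mem _ hwmem, hrv.trans hvw⟩
    · rw [prod_cons, he, h2, flatten_cons]

/-! ### conjugation -/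

/-- The key one-letter conjugation step. -/
lemma Bstep (ℓ : α × Bool) (p w' : List (α × Bool))
    (hred : IsRed (p ++ w' ++ invRev p)) (hcr : CR w') :
    ∃ p₂ w₂, w' ~r w₂ ∧ CR w₂ ∧ IsRed (p₂ ++ w₂ ++ invRev p₂) ∧
      (mk [ℓ] * mk (p ++ w' ++ invRev p) * (mk [ℓ])⁻¹).toWord = p₂ ++ w₂ ++ invRev p₂ := by
  have hkey : mk [ℓ] * mk (p ++ w' ++ invRev p) * (mk [ℓ])⁻¹
      = mk ((ℓ :: (p ++ w' ++ invRev p)) ++ [(ℓ.1, !ℓ.2)]) := by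
    rw [inv_mk, invRev_singleton, mul_mk, mul_mk]
    rfl
  rcases p with _ | ⟨d, p'⟩
  · -- p = []
    simp only [nil_append, invRev_empty, append_nil] at hred hkey ⊢
    rcases hw0 : w' with _ | ⟨qh, t⟩
    · -- w' = []
      subst hw0
      refine ⟨[], [], IsRotated.refl _, fun a ha => by simp at ha, by simp [IsRed, List.Chain'], ?_⟩
      rw [hkey]
      have h1 : (ℓ :: ([] : List (α × Bool))) ++ [(ℓ.1, !ℓ.2)] = ℓ :: (ℓ.1, !ℓ.2) :: [] := by
        simp
      rw [h1, mk_cancel_front, toWord_mk, reduce_nil]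
      simp
    · subst hw0
      by_cases hq : qh = (ℓ.1, !ℓ.2)
      · -- front rotation : w' = ℓ⁻¹ :: t  becomes t ++ [ℓ⁻¹]
        subst hq
        have hIr2 : IsRed (t ++ [((ℓ.1, !ℓ.2) : α × Bool)]) := by
          rw [IsRed, List.Chain', List.isChain_append]
          refine ⟨(List.isChain_cons.1 hred).2, List.isChain_singleton _, ?_⟩
          intro a ha b hb
          simp only [head?_cons, Option.mem_def, Option.some.injEq] at hb
          subst hb
          rcases t with _ | ⟨h2, t'⟩
          · simp at ha
          · have halast : a ∈ (((ℓ.1, !ℓ.2) : α × Bool) :: h2 :: t').getLast? := by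
              rw [List.getLast?_cons_cons]; exact ha
            have h5 := hcr (ℓ.1, !ℓ.2) (by simp) a halast
            intro he
            rw [flip_eq_comm] at he
            simp only [Bool.not_not] at he
            exact h5 (by rw [he]; simp)
        refine ⟨[], t ++ [(ℓ.1, !ℓ.2)], ⟨1, by simp [rotate_cons_succ]⟩, ?_, ?_, ?_⟩
        · -- CR (t ++ [ℓ'])
          intro a ha b hb
          rw [getLast?_concat] at hb
          simp only [Option.mem_def, Option.some.injEq] at hb
          subst hb
          rcases t with _ | ⟨h2, t'⟩
          · simp only [nil_append, head?_cons, Option.mem_def, Option.some.injEq] at ha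
            subst ha
            exact flip_ne_self _
          · simp only [cons_append, head?_cons, Option.mem_def, Option.some.injEq] at ha
            have h3 : h2 ≠ (((ℓ.1, !ℓ.2) : α × Bool).1, !((ℓ.1, !ℓ.2) : α × Bool).2) :=
              (List.isChain_cons.1 hred).1 h2 (by simp)
            have ha2 : a = h2 := by
              first | exact ha | exact ha.symm
            rw [ha2]
            intro he
            rw [flip_eq_comm] at he
            exact h3 he
        · simpa using hIr2
        · rw [hkey]
          have h1 : (ℓ :: ((ℓ.1, !ℓ.2) :: t)) ++ [(ℓ.1, !ℓ.2)]
              = ℓ :: (ℓ.1, !ℓ.2) :: (t ++ [(ℓ.1, !ℓ.2)]) := by simp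
          rw [h1, mk_cancel_front, toWord_mk_eq hIr2]
          simp
      · -- head does not cancel
        have hw'ne : (qh :: t) ≠ [] := cons_ne_nil _ _
        obtain ⟨t', r, hw'⟩ : ∃ t' r, qh :: t = t' ++ [r] :=
          ⟨(qh :: t).dropLast, (qh :: t).getLast hw'ne, by
            rw [dropLast_append_getLast hw'ne]⟩
        have hqh_head : ∀ y ∈ t'.head?, y = qh := by
          intro y hy
          rcases t' with _ | ⟨h2, t''⟩
          · simp at hy
          · simp only [head?_cons, Option.mem_def, Option.some.injEq] at hy
            have := congrArg List.head? hw'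
            simp at this
            rw [← hy, this]
        by_cases hr : r = ℓ
        · -- back rotation: w' = t' ++ [ℓ] becomes ℓ :: t'
          have hIr2 : IsRed (r :: t') := by
            rw [IsRed, List.Chain', List.isChain_cons]
            constructor
            · intro y hy
              have hy' := hqh_head y hy
              subst hy'
              subst hr
              exact hq
            · have h6 : IsRed (qh :: t) := by simpa using hred
              rw [hw'] at h6
              exact (List.isChain_append.1 h6).1
          refine ⟨[], r :: t', ?_, ?_, ?_, ?_⟩
          · rw [hw']
            exact (IsRotated.symm ⟨1, by simp [rotate_cons_succ]⟩)
          · -- CR (r :: t')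
            intro a ha b hb
            simp only [head?_cons, Option.mem_def, Option.some.injEq] at ha
            have ha2 : r = a := by first | exact ha | exact ha.symm
            subst ha2
            rcases t'.eq_nil_or_concat with h0 | ⟨t'', z, h0⟩
            · subst h0
              simp only [getLast?_singleton, Option.mem_def, Option.some.injEq] at hb
              have hb2 : r = b := by first | exact hb | exact hb.symm
              subst hb2
              exact flip_ne_self _
            · subst h0
              have h7 : (r :: (t''.concat z)).getLast? = some z := by
                rw [show r :: (t''.concat z) = (r :: t'') ++ [z] by simp [concat_eq_append],
                  getLast?_concat]
              rw [h7] at hb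
              simp only [Option.mem_def, Option.some.injEq] at hb
              have hb2 : b = z := by first | exact hb | exact hb.symm
              subst hb2
              have h8 : IsRed ((t'' ++ [b]) ++ [r]) := by
                have h9 : IsRed (qh :: t) := by simpa using hred
                rw [hw', concat_eq_append] at h9
                exact h9
              rw [IsRed, List.Chain', List.isChain_append] at h8
              have h4 := h8.2.2 b (by rw [getLast?_concat]; rfl) r (by simp)
              intro he
              rw [flip_eq_comm] at he
              exact h4 he
          · simpa using hIr2
          · rw [hkey, hw']
            subst hr
            have h1 : (r :: (t' ++ [r])) ++ [(r.1, !r.2)] = (r :: t') ++ [r, (r.1, !r.2)] := by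
              simp
            rw [h1, mk_cancel_back, toWord_mk_eq hIr2]
            simp
        · -- no cancellation on either side
          have hred' : IsRed (qh :: t) := by simpa using hred
          have hbig : IsRed ((ℓ :: (qh :: t)) ++ [(ℓ.1, !ℓ.2)]) := by
            rw [IsRed, List.Chain', List.isChain_append]
            refine ⟨?_, List.isChain_singleton _, ?_⟩
            · rw [List.isChain_cons]
              refine ⟨fun y hy => ?_, hred'⟩
              simp only [head?_cons, Option.mem_def, Option.some.injEq] at hy
              subst hy
              exact hq
            · intro a ha b hb
              simp only [head?_cons, Option.mem_def, Option.some.injEq] at hb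
              subst hb
              have ha' : a = r := by
                rw [show ℓ :: (qh :: t) = (ℓ :: t') ++ [r] by rw [hw']; rfl,
                  getLast?_concat] at ha
                simp only [Option.mem_def, Option.some.injEq] at ha
                exact ha.symm
              subst ha'
              intro he
              rw [flip_eq_comm] at he
              simp only [Bool.not_not] at he
              exact hr he
          refine ⟨[ℓ], qh :: t, IsRotated.refl _, hcr, ?_, ?_⟩
          · rw [invRev_singleton]
            simpa using hbig
          · rw [hkey, toWord_mk_eq hbig, invRev_singleton]
            simp
  · -- p = d :: p'
    by_cases hd : d = (ℓ.1, !ℓ.2)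
    · -- cancellation at both ends
      have hM : IsRed (p' ++ w' ++ invRev p') := by
        refine List.IsChain.infix hred ⟨[d], [(d.1, !d.2)], ?_⟩
        simp [invRev_cons, append_assoc]
      refine ⟨p', w', IsRotated.refl _, hcr, hM, ?_⟩
      rw [hkey]
      subst hd
      have hlist : (ℓ :: (((ℓ.1, !ℓ.2) :: p') ++ w' ++ invRev ((ℓ.1, !ℓ.2) :: p')))
            ++ [((ℓ.1, !ℓ.2) : α × Bool)]
          = ℓ :: (ℓ.1, !ℓ.2) :: ((p' ++ w' ++ invRev p') ++ [ℓ, (ℓ.1, !ℓ.2)]) := by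
        simp [invRev_cons, append_assoc]
      rw [hlist, mk_cancel_front, mk_cancel_back, toWord_mk_eq hM]
    · -- p grows
      have hbig : IsRed ((ℓ :: ((d :: p') ++ w' ++ invRev (d :: p'))) ++ [(ℓ.1, !ℓ.2)]) := by
        rw [IsRed, List.Chain', List.isChain_append]
        refine ⟨?_, List.isChain_singleton _, ?_⟩
        · rw [List.isChain_cons]
          refine ⟨fun y hy => ?_, hred⟩
          simp only [cons_append, head?_cons, Option.mem_def, Option.some.injEq] at hy
          subst hy
          exact hd
        · intro a ha b hb
          simp only [head?_cons, Option.mem_def, Option.some.injEq] at hb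
          subst hb
          have ha' : a = (d.1, !d.2) := by
            rw [show ℓ :: ((d :: p') ++ w' ++ invRev (d :: p'))
                = (ℓ :: ((d :: p') ++ w' ++ invRev p')) ++ [(d.1, !d.2)] by
              simp [invRev_cons, append_assoc], getLast?_concat] at ha
            simp only [Option.mem_def, Option.some.injEq] at ha
            exact ha.symm
          subst ha'
          intro he
          simp only [Bool.not_not, Prod.mk.eta] at he
          exact hd he.symm
      refine ⟨ℓ :: d :: p', w', IsRotated.refl _, hcr, ?_, ?_⟩
      · rw [show (ℓ :: d :: p') ++ w' ++ invRev (ℓ :: d :: p')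
            = (ℓ :: ((d :: p') ++ w' ++ invRev (d :: p'))) ++ [(ℓ.1, !ℓ.2)] by
          simp [invRev_cons, append_assoc]]
        exact hbig
      · rw [hkey, toWord_mk_eq hbig]
        simp [invRev_cons, append_assoc]

/-- Structure of the reduced word of a conjugate of a cyclically reduced element. -/
lemma conj_structure : ∀ (k : ℕ) (g c : FreeGroup α), g.toWord.length ≤ k → CR c.toWord →
    ∃ p w₂, c.toWord ~r w₂ ∧ CR w₂ ∧ IsRed (p ++ w₂ ++ invRev p) ∧
      (g * c * g⁻¹).toWord = p ++ w₂ ++ invRev p := by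
  intro k
  induction k with
  | zero =>
    intro g c hg hc
    have h0 : g.toWord = [] := eq_nil_of_length_eq_zero (Nat.le_zero.1 hg)
    have hg1 : g = 1 := toWord_eq_nil_iff.1 h0
    subst hg1
    refine ⟨[], c.toWord, IsRotated.refl _, hc, ?_, by simp⟩
    simpa using (isRed_toWord c)
  | succ k ih =>
    intro g c hg hc
    rcases hgw : g.toWord with _ | ⟨ℓ, t⟩
    · have hg1 : g = 1 := toWord_eq_nil_iff.1 hgw
      subst hg1
      refine ⟨[], c.toWord, IsRotated.refl _, hc, ?_, by simp⟩
      simpa using (isRed_toWord c)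
    · have hIt : IsRed t := by
        have := isRed_toWord g
        rw [hgw] at this
        exact (List.isChain_cons.1 this).2
      have hg' : (mk t).toWord = t := toWord_mk_eq hIt
      have hglen : (mk t).toWord.length ≤ k := by
        rw [hg']
        have := congrArg List.length hgw
        simp at this
        omega
      obtain ⟨p, w₂, hrot, hcw, hIr, hword⟩ := ih (mk t) c hglen hc
      have hfact : g = mk [ℓ] * mk t := by
        rw [mul_mk]
        rw [← mk_toWord (x := g), hgw]
        rfl
      have helt : g * c * g⁻¹ = mk [ℓ] * (mk t * c * (mk t)⁻¹) * (mk [ℓ])⁻¹ := by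
        rw [hfact]
        group
      have hmkeq : mk t * c * (mk t)⁻¹ = mk (p ++ w₂ ++ invRev p) := by
        rw [← hword, mk_toWord]
      obtain ⟨p₃, w₃, hrot3, hcw3, hIr3, hword3⟩ := Bstep ℓ p w₂ hIr hcw
      exact ⟨p₃, w₃, hrot.trans hrot3, hcw3, hIr3, by rw [helt, hmkeq, hword3]⟩

end OneAtATime

/-- If every `a`-exponent of each `uᵢ` has absolute value at most 1, then in the
cyclic reduction of `u₁ ⋯ uₙ` (any cyclically reduced conjugate `c`, which accounts
for all rotations of the cyclic word), every `a`-block has absolute exponent at most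
`n + 1`. -/
theorem lemma_one_at_a_time_cyclic (n : ℕ) (u : Fin n → F2)
    (h : ∀ i, ¬ HasBlock 0 2 (u i))
    (c g : F2) (hc : (List.ofFn u).prod = g * c * g⁻¹)
    (hcr : CyclicallyReduced c.toWord) :
    ¬ HasBlock 0 (n + 2) c := by
  intro hb
  open OneAtATime in
  obtain ⟨s, hblk⟩ : ∃ s : Bool, List.replicate (n + 2) ((0 : Fin 2), s) <:+: c.toWord := by
    rcases (hb : _ ∨ _) with hb | hb
    exacts [⟨true, hb⟩, ⟨false, hb⟩]
  obtain ⟨vs, hN, hmem, hw⟩ := OneAtATime.prod_structure (List.ofFn u)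
  have hNn : OneAtATime.N vs ≤ n := by simpa using hN
  have hcr' : OneAtATime.CR c.toWord := hcr
  obtain ⟨p, w₂, hrot, _, _, hword⟩ :=
    OneAtATime.conj_structure (g.toWord.length) g c le_rfl hcr'
  rw [hc, hword] at hw
  by_cases hcnil : c.toWord = []
  · rw [hcnil, List.infix_nil] at hblk
    have := congrArg List.length hblk
    simp at this
  · obtain ⟨k, hk⟩ := hrot
    have hlen : 0 < c.toWord.length := List.length_pos_iff.2 hcnil
    have hmlt : k % c.toWord.length ≤ c.toWord.length := le_of_lt (Nat.mod_lt _ hlen)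
    set m := k % c.toWord.length with hm
    have hw2 : w₂ = c.toWord.drop m ++ c.toWord.take m := by
      rw [← List.rotate_eq_drop_append_take hmlt, hm, List.rotate_mod, hk]
    set A := c.toWord.take m with hA
    set B := c.toWord.drop m with hB
    have hE : vs.flatten = p ++ (B ++ (A ++ FreeGroup.invRev p)) := by
      rw [← hw, hw2]
      simp [List.append_assoc]
    obtain ⟨L0, L1, _, hY1, hmem1, _, _, hN1⟩ := OneAtATime.split_flatten vs _ _ hE
    obtain ⟨LB, L2, hXB, hY2, hmem2, hN2a, _, _⟩ := OneAtATime.split_flatten L1 _ _ hY1.symm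
    obtain ⟨LA, L3, hXA, _, hmem3, _, hN3, _⟩ := OneAtATime.split_flatten L2 _ _ hY2.symm
    have hcto : c.toWord = (LA ++ LB).flatten := by
      rw [List.flatten_append, ← hXA, ← hXB, hA, hB, List.take_append_drop]
    have hpieces : ∀ q ∈ LA ++ LB, ∀ j,
        List.replicate j ((0 : Fin 2), s) <:+: q → j ≤ 1 := by
      intro q hq j hj
      have hqi : ∃ i : Fin n, q <:+: (u i).toWord := by
        have step1 : ∃ v ∈ vs, q <:+: v := by
          rcases List.mem_append.1 hq with hq | hq
          · obtain ⟨r2, hr2, hq2⟩ := hmem3 q (List.mem_append_left _ hq)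
            obtain ⟨r1, hr1, hq1⟩ := hmem2 r2 (List.mem_append_right _ hr2)
            obtain ⟨v, hv, hqv⟩ := hmem1 r1 (List.mem_append_right _ hr1)
            exact ⟨v, hv, (hq2.trans hq1).trans hqv⟩
          · obtain ⟨r1, hr1, hq1⟩ := hmem2 q (List.mem_append_left _ hq)
            obtain ⟨v, hv, hqv⟩ := hmem1 r1 (List.mem_append_right _ hr1)
            exact ⟨v, hv, hq1.trans hqv⟩
        obtain ⟨v, hv, hqv⟩ := step1
        obtain ⟨uu, huu, hvu⟩ := hmem v hv
        obtain ⟨i, rfl⟩ := List.mem_ofFn.1 huu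
        exact ⟨i, hqv.trans hvu⟩
      obtain ⟨i, hqi⟩ := hqi
      by_contra hj2
      push_neg at hj2
      have hrep2 : List.replicate 2 ((0 : Fin 2), s) <+: List.replicate j ((0 : Fin 2), s) := by
        refine ⟨List.replicate (j - 2) ((0 : Fin 2), s), ?_⟩
        rw [← List.replicate_add]
        congr 1
        omega
      have hblk2 : List.replicate 2 ((0 : Fin 2), s) <:+: (u i).toWord :=
        (hrep2.isInfix.trans hj).trans hqi
      cases s with
      | true => exact h i (Or.inl hblk2)
      | false => exact h i (Or.inr hblk2)
    have hfin := OneAtATime.block_le_N ((0 : Fin 2), s) (LA ++ LB) hpieces (n + 2)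
      (hcto ▸ hblk)
    rw [OneAtATime.N_append] at hfin
    omega
end

section
/- Every basis $(x, y)$ of the free group $F_2$ is conjugate (by a single element) to a basis $(x', y')$ in which both $x'$ and $y'$ are cyclically reduced words. -/
open FreeGroup List

namespace CR

abbrev Ltr := Fin 2 × Bool

/-- no-cancellation relation between adjacent letters -/
def NC : Ltr → Ltr → Prop := fun a b => b ≠ (a.1, !a.2)

lemma NC_flip {p q : Ltr} (h : ¬ NC p q) : q = (p.1, !p.2) := not_not.mp h

lemma flip_letter : ∀ p q : Ltr, q = (p.1, !p.2) → p = (q.1, !q.2) := by decide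

lemma self_ne_flip : ∀ C : Ltr, C ≠ (C.1, !C.2) := by decide

lemma reduce_eq_self_of_chain' : ∀ {l : List Ltr}, l.Chain' NC → FreeGroup.reduce l = l := by
  intro l h
  induction l with
  | nil => rfl
  | cons x l ih =>
    have hl : List.Chain' NC l := h.tail
    rw [FreeGroup.reduce.cons, ih hl]
    cases l with
    | nil => rfl
    | cons hd tl =>
      have hx : NC x hd := (List.isChain_cons_cons.mp h).1
      simp only []
      rw [if_neg]
      rintro ⟨h1, h2⟩
      exact hx (by ext <;> simp [h1.symm, h2])

lemma chain'_of_reduce_eq_self : ∀ {l : List Ltr}, FreeGroup.reduce l = l → l.Chain' NC := by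
  intro l
  induction l with
  | nil => intro; exact List.isChain_nil
  | cons x l ih =>
    intro h
    rw [FreeGroup.reduce.cons] at h
    rcases ht : FreeGroup.reduce l with _ | ⟨hd, tl⟩
    · rw [ht] at h
      simp only [] at h
      have : l = [] := by injection h with _ h'; exact h'.symm
      subst this; exact List.isChain_singleton x
    · rw [ht] at h
      simp only [] at h
      by_cases hc : x.1 = hd.1 ∧ x.2 = !hd.2
      · rw [if_pos hc] at h
        -- h : tl = x :: l, impossible by lengths
        exfalso
        have hred : FreeGroup.Red l (FreeGroup.reduce l) := FreeGroup.reduce.red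
        have hle := FreeGroup.Red.length_le hred
        rw [ht] at hle
        have hlen : tl.length = l.length + 1 := by rw [h]; simp
        simp only [List.length_cons] at hle
        omega
      · rw [if_neg hc] at h
        have hl : l = hd :: tl := by
          have := congrArg List.tail h
          simpa using this.symm
        have : FreeGroup.reduce l = l := by rw [ht, hl]
        have hch := ih this
        rw [hl]
        refine List.isChain_cons_cons.mpr ⟨?_, by rwa [hl] at hch⟩
        intro hq
        exact hc ⟨by rw [hq], by rw [hq]; simp⟩

lemma chain'_toWord (w : F2) : w.toWord.Chain' NC :=
  chain'_of_reduce_eq_self (FreeGroup.reduce_toWord w)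

lemma toWord_mk_chain {l : List Ltr} (h : l.Chain' NC) : (FreeGroup.mk l).toWord = l := by
  rw [FreeGroup.toWord_mk, reduce_eq_self_of_chain' h]

lemma ne_one_iff {w : F2} : w ≠ 1 ↔ w.toWord ≠ [] := by
  rw [not_iff_not, FreeGroup.toWord_eq_nil_iff]

/-- Junction lemma: multiplication with no cancellation at the junction. -/
lemma toWord_mul_junction {v w : F2} (hv : v ≠ 1) (hw : w ≠ 1)
    (hj : ∀ p ∈ v.toWord.getLast?, ∀ q ∈ w.toWord.head?, NC p q) :
    (v * w).toWord = v.toWord ++ w.toWord := by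
  conv_lhs => rw [← FreeGroup.mk_toWord (x := v), ← FreeGroup.mk_toWord (x := w)]
  rw [FreeGroup.mul_mk]
  exact toWord_mk_chain (List.isChain_append.mpr ⟨chain'_toWord v, chain'_toWord w, hj⟩)

lemma two_le_len {l : List Ltr} {p q : Ltr} (h1 : l.head? = some p) (h2 : l.getLast? = some q)
    (h : p ≠ q) : 2 ≤ l.length := by
  match l with
  | [] => simp at h1
  | [r] =>
    simp_all
  | r :: s :: t => simp

end CR

namespace CR

lemma getLast?_append_right {l l' : List Ltr} (h : l' ≠ []) :
    (l ++ l').getLast? = l'.getLast? := by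
  rw [List.getLast?_append]
  rcases l' with _ | ⟨a, t⟩
  · exact absurd rfl h
  · rw [List.getLast?_eq_getLast (by simp)]; rfl

/-- decomposition of a non-cyclically-reduced element -/
lemma strip {w : F2} {p q : Ltr} (hh : w.toWord.head? = some p)
    (hl : w.toWord.getLast? = some q) (hpq : q = (p.1, !p.2)) :
    ∃ mid : List Ltr, w.toWord = p :: mid ++ [q] ∧ (FreeGroup.mk mid).toWord = mid ∧
      w = FreeGroup.mk [p] * FreeGroup.mk mid * (FreeGroup.mk [p])⁻¹ := by
  obtain ⟨t, hwt⟩ := List.head?_eq_some_iff.mp hh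
  have ht : t ≠ [] := by
    rintro rfl
    rw [hwt] at hl
    simp at hl
    exact self_ne_flip p (hl ▸ hpq)
  refine ⟨t.dropLast, ?_, ?_, ?_⟩
  · have hlast : t.getLast ht = q := by
      rw [hwt] at hl
      rw [List.getLast?_eq_getLast (l := p :: t) (by simp)] at hl
      have := Option.some_inj.mp hl
      rw [← this, List.getLast_cons ht]
    conv_lhs => rw [hwt, ← List.dropLast_append_getLast ht, hlast]
    simp
  · apply toWord_mk_chain
    apply (chain'_toWord w).infix
    exact ⟨[p], [q], by
      rw [hwt, ← List.dropLast_append_getLast ht]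
      have hlast : t.getLast ht = q := by
        rw [hwt] at hl
        rw [List.getLast?_eq_getLast (l := p :: t) (by simp)] at hl
        have := Option.some_inj.mp hl
        rw [← this, List.getLast_cons ht]
      rw [hlast]; simp⟩
  · have hinv : (FreeGroup.mk [p])⁻¹ = FreeGroup.mk [q] := by
      rw [FreeGroup.inv_mk]
      congr 1
      simp [FreeGroup.invRev, hpq]
    rw [hinv, FreeGroup.mul_mk, FreeGroup.mul_mk]
    conv_lhs => rw [← FreeGroup.mk_toWord (x := w)]
    congr 1
    have hlast : t.getLast ht = q := by
      rw [hwt] at hl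
      rw [List.getLast?_eq_getLast (l := p :: t) (by simp)] at hl
      have := Option.some_inj.mp hl
      rw [← this, List.getLast_cons ht]
    rw [hwt]
    conv_lhs => rw [← List.dropLast_append_getLast ht, hlast]
    simp

lemma toWord_mk_singleton (p : Ltr) : (FreeGroup.mk [p]).toWord = [p] :=
  toWord_mk_chain (List.isChain_singleton p)

lemma mk_singleton_ne_one (p : Ltr) : FreeGroup.mk [p] ≠ 1 :=
  ne_one_iff.mpr (by rw [toWord_mk_singleton]; simp)

/-- Powers preserve the first and last letter. -/
lemma pow_spec : ∀ (n : ℕ), ∀ (u : F2), u.toWord.length ≤ n → u ≠ 1 → ∀ k : ℕ,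
    u ^ (k+1) ≠ 1 ∧ (u ^ (k+1)).toWord.head? = u.toWord.head? ∧
      (u ^ (k+1)).toWord.getLast? = u.toWord.getLast? := by
  intro n
  induction n using Nat.strong_induction_on with
  | _ n ih =>
    intro u hlen hu k
    by_cases hcyc : CyclicallyReduced u.toWord
    · induction k with
      | zero => rw [zero_add, pow_one]; exact ⟨hu, rfl, rfl⟩
      | succ k ihk =>
        obtain ⟨h1, h2, h3⟩ := ihk
        have hj : ∀ p ∈ u.toWord.getLast?, ∀ q ∈ (u ^ (k+1)).toWord.head?, NC p q := by
          intro p hp q hq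
          rw [h2] at hq
          intro hcon
          exact hcyc q hq p hp (flip_letter p q hcon)
        have hw := toWord_mul_junction hu h1 hj
        have hps : u ^ (k+1+1) = u * u ^ (k+1) := pow_succ' u (k+1)
        rw [hps]
        have hune : u.toWord ≠ [] := ne_one_iff.mp hu
        have hpne : (u ^ (k+1)).toWord ≠ [] := ne_one_iff.mp h1
        refine ⟨?_, ?_, ?_⟩
        · rw [ne_one_iff, hw]; simp [hune]
        · rw [hw, List.head?_append_of_ne_nil _ hune]
        · rw [hw, getLast?_append_right hpne, h3]
    · simp only [CyclicallyReduced] at hcyc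
      push_neg at hcyc
      obtain ⟨p, hp, q, hq, hpq⟩ := hcyc
      rw [Option.mem_def] at hp hq
      obtain ⟨mid, hdec, hmidw, hfac⟩ := strip hp hq hpq
      have hch : List.Chain' NC (p :: mid ++ [q]) := by rw [← hdec]; exact chain'_toWord u
      have hmidne : mid ≠ [] := by
        rintro rfl
        simp at hch
        exact (List.isChain_cons_cons.mp hch).1 hpq
      have hj1 : ∀ r ∈ mid.head?, NC p r := by
        intro r hr
        apply (List.isChain_cons.mp hch).1
        rcases mid with _ | ⟨m0, mr⟩
        · exact absurd rfl hmidne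
        · simpa using hr
      have hj2 : ∀ r ∈ mid.getLast?, NC r q := by
        intro r hr
        have hch2 : List.Chain' NC (mid ++ [q]) := (List.isChain_cons.mp hch).2
        have := (List.isChain_append.mp hch2).2.2
        exact this r hr q rfl
      set c := FreeGroup.mk [p] with hc
      set v := FreeGroup.mk mid with hv
      have hvne : v ≠ 1 := ne_one_iff.mpr (by rw [hmidw]; exact hmidne)
      have hmidlen : mid.length < n := by
        have : u.toWord.length = mid.length + 2 := by rw [hdec]; simp
        omega
      obtain ⟨hv1, hv2, hv3⟩ := ih mid.length hmidlen v (le_of_eq (by rw [hmidw])) hvne k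
      rw [hmidw] at hv2 hv3
      have hcinv : c⁻¹ = FreeGroup.mk [q] := by
        rw [hc, FreeGroup.inv_mk]
        congr 1
        simp [FreeGroup.invRev, hpq]
      have hcw : c.toWord = [p] := toWord_mk_singleton p
      have hciw : (c⁻¹).toWord = [q] := by rw [hcinv]; exact toWord_mk_singleton q
      have hupow : u ^ (k+1) = c * v ^ (k+1) * c⁻¹ := by
        rw [hfac, conj_pow]
      have hA : (c * v ^ (k+1)).toWord = [p] ++ (v ^ (k+1)).toWord := by
        apply toWord_mul_junction (mk_singleton_ne_one p) hv1
        intro a ha b hb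
        rw [hcw] at ha
        simp at ha
        subst ha
        rw [hv2] at hb
        exact hj1 b hb
      have hAne : (c * v ^ (k+1)).toWord ≠ [] := by rw [hA]; simp
      have hB : (c * v ^ (k+1) * c⁻¹).toWord = ([p] ++ (v ^ (k+1)).toWord) ++ [q] := by
        rw [← hA, ← hciw]
        apply toWord_mul_junction (ne_one_iff.mpr hAne) (by rw [ne_one_iff, hciw]; simp)
        intro a ha b hb
        rw [hciw] at hb
        simp at hb
        subst hb
        rw [hA, getLast?_append_right (ne_one_iff.mp hv1), hv3] at ha
        exact hj2 a ha
      refine ⟨?_, ?_, ?_⟩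
      · rw [hupow, ne_one_iff, hB]; simp
      · rw [hupow, hB, hdec]; simp
      · rw [hupow, hB, hdec, List.getLast?_concat]
        have hre : p :: mid ++ [q] = (p :: mid) ++ [q] := by simp
        rw [hre, List.getLast?_concat]

end CR

namespace CR

lemma getLast?_map' {α β : Type*} (f : α → β) (l : List α) :
    (l.map f).getLast? = l.getLast?.map f := by
  rw [← List.head?_reverse, ← List.map_reverse, List.head?_map, List.head?_reverse]

lemma head?_invRev (l : List Ltr) :
    (FreeGroup.invRev l).head? = l.getLast?.map (fun p => (p.1, !p.2)) := by
  rw [FreeGroup.invRev, List.head?_reverse, getLast?_map']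

lemma getLast?_invRev (l : List Ltr) :
    (FreeGroup.invRev l).getLast? = l.head?.map (fun p => (p.1, !p.2)) := by
  rw [FreeGroup.invRev, List.getLast?_reverse, List.head?_map]

lemma flip_flip : ∀ p : Ltr, ((p.1, !p.2).1, !(p.1, !p.2).2) = p := by decide

lemma zpow_syl {w : F2} (hw : w ≠ 1) {k : ℤ} (hk : k ≠ 0) :
    w ^ k ≠ 1 ∧
    (0 < k → (w ^ k).toWord.head? = w.toWord.head? ∧
        (w ^ k).toWord.getLast? = w.toWord.getLast?) ∧
    (k < 0 → (w ^ k).toWord.head? = w.toWord.getLast?.map (fun p => (p.1, !p.2)) ∧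
        (w ^ k).toWord.getLast? = w.toWord.head?.map (fun p => (p.1, !p.2))) := by
  rcases lt_or_gt_of_ne hk with hneg | hpos
  · -- k < 0
    have hky : w ^ k = (w⁻¹) ^ (-k) := by rw [inv_zpow, ← zpow_neg, neg_neg]
    have hpos' : (0:ℤ) < -k := by omega
    obtain ⟨m, hm⟩ : ∃ m : ℕ, (-k).toNat = m + 1 := by
      have : (-k).toNat ≠ 0 := by omega
      exact ⟨(-k).toNat - 1, by omega⟩
    have hnat : w ^ k = (w⁻¹) ^ (m + 1) := by
      rw [hky, ← Int.toNat_of_nonneg hpos'.le, zpow_natCast, hm]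
    have hwinv : (w⁻¹) ≠ 1 := inv_ne_one.mpr hw
    obtain ⟨h1, h2, h3⟩ := pow_spec (w⁻¹).toWord.length (w⁻¹) le_rfl hwinv m
    have hiw : (w⁻¹).toWord = FreeGroup.invRev w.toWord := FreeGroup.toWord_inv w
    refine ⟨by rw [hnat]; exact h1, fun h => absurd h (by omega), fun _ => ?_⟩
    constructor
    · rw [hnat, h2, hiw, head?_invRev]
    · rw [hnat, h3, hiw, getLast?_invRev]
  · -- k > 0
    obtain ⟨m, hm⟩ : ∃ m : ℕ, k.toNat = m + 1 := by
      have : k.toNat ≠ 0 := by omega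
      exact ⟨k.toNat - 1, by omega⟩
    have hnat : w ^ k = w ^ (m + 1) := by
      rw [← Int.toNat_of_nonneg hpos.le, zpow_natCast, hm]
    obtain ⟨h1, h2, h3⟩ := pow_spec w.toWord.length w le_rfl hw m
    exact ⟨by rw [hnat]; exact h1, fun _ => ⟨by rw [hnat, h2], by rw [hnat, h3]⟩,
      fun h => absurd h (by omega)⟩

lemma xsyl {x : F2} {C : Ltr} (hx : x ≠ 1) (hh : x.toWord.head? = some C)
    (hl : x.toWord.getLast? = some (C.1, !C.2)) :
    ∀ k : ℤ, k ≠ 0 → x ^ k ≠ 1 ∧ (x ^ k).toWord.head? = some C ∧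
      (x ^ k).toWord.getLast? = some (C.1, !C.2) := by
  intro k hk
  obtain ⟨h1, h2, h3⟩ := zpow_syl hx hk
  refine ⟨h1, ?_⟩
  rcases lt_or_gt_of_ne hk with hneg | hpos
  · obtain ⟨ha, hb⟩ := h3 hneg
    constructor
    · rw [ha, hl]; simp [flip_flip]
    · rw [hb, hh]; rfl
  · obtain ⟨ha, hb⟩ := h2 hpos
    exact ⟨by rw [ha, hh], by rw [hb, hl]⟩

lemma ysyl {y : F2} {C : Ltr} (hy : y ≠ 1) (hh : ∀ p ∈ y.toWord.head?, p ≠ C)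
    (hl : ∀ q ∈ y.toWord.getLast?, q ≠ (C.1, !C.2)) :
    ∀ l : ℤ, l ≠ 0 → y ^ l ≠ 1 ∧ (∀ p ∈ (y ^ l).toWord.head?, p ≠ C) ∧
      (∀ q ∈ (y ^ l).toWord.getLast?, q ≠ (C.1, !C.2)) := by
  intro l hlne
  obtain ⟨h1, h2, h3⟩ := zpow_syl hy hlne
  refine ⟨h1, ?_⟩
  rcases lt_or_gt_of_ne hlne with hneg | hpos
  · obtain ⟨ha, hb⟩ := h3 hneg
    constructor
    · intro p hp
      rw [ha] at hp
      simp only [Option.mem_def, Option.map_eq_some_iff] at hp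
      obtain ⟨q, hq, rfl⟩ := hp
      intro hcon
      exact hl q hq (flip_letter q C hcon.symm)
    · intro q hq
      rw [hb] at hq
      simp only [Option.mem_def, Option.map_eq_some_iff] at hq
      obtain ⟨p, hp, rfl⟩ := hq
      intro hcon
      apply hh p hp
      have := flip_letter p (C.1, !C.2) hcon.symm
      simpa [flip_flip] using this
  · obtain ⟨ha, hb⟩ := h2 hpos
    exact ⟨by rw [ha]; exact hh, by rw [hb]; exact hl⟩

end CR

namespace CR

/-- Normal form: alternating products of nonzero powers of `x` and `y`.
`true` means the leading syllable is an `x`-power. -/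
inductive NF (x y : F2) : Bool → F2 → Prop
  | xpow : ∀ (k : ℤ), k ≠ 0 → NF x y true (x ^ k)
  | ypow : ∀ (l : ℤ), l ≠ 0 → NF x y false (y ^ l)
  | xcons : ∀ (k : ℤ), k ≠ 0 → ∀ w, NF x y false w → NF x y true (x ^ k * w)
  | ycons : ∀ (l : ℤ), l ≠ 0 → ∀ w, NF x y true w → NF x y false (y ^ l * w)

lemma NF_mul_x {x y : F2} (ε : ℤ) (hε : ε = 1 ∨ ε = -1) (w : F2)
    (h : w = 1 ∨ ∃ b, NF x y b w) : x ^ ε * w = 1 ∨ ∃ b, NF x y b (x ^ ε * w) := by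
  have hεne : ε ≠ 0 := by rcases hε with rfl | rfl <;> norm_num
  rcases h with rfl | ⟨b, hb⟩
  · right; exact ⟨true, by rw [mul_one]; exact NF.xpow ε hεne⟩
  · cases hb with
    | xpow k hk =>
      have hxx : x ^ ε * x ^ k = x ^ (ε + k) := (zpow_add x ε k).symm
      by_cases hz : ε + k = 0
      · left; rw [hxx, hz, zpow_zero]
      · right; exact ⟨true, hxx ▸ NF.xpow (ε + k) hz⟩
    | ypow l hl =>
      right; exact ⟨true, NF.xcons ε hεne _ (NF.ypow l hl)⟩
    | xcons k hk w' hw' =>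
      have hxx : x ^ ε * (x ^ k * w') = x ^ (ε + k) * w' := by
        rw [← mul_assoc, ← zpow_add]
      by_cases hz : ε + k = 0
      · right
        refine ⟨false, ?_⟩
        rw [hxx, hz, zpow_zero, one_mul]
        exact hw'
      · right; exact ⟨true, hxx ▸ NF.xcons (ε + k) hz _ hw'⟩
    | ycons l hl w' hw' =>
      right; exact ⟨true, NF.xcons ε hεne _ (NF.ycons l hl w' hw')⟩

lemma NF_mul_y {x y : F2} (ε : ℤ) (hε : ε = 1 ∨ ε = -1) (w : F2)
    (h : w = 1 ∨ ∃ b, NF x y b w) : y ^ ε * w = 1 ∨ ∃ b, NF x y b (y ^ ε * w) := by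
  have hεne : ε ≠ 0 := by rcases hε with rfl | rfl <;> norm_num
  rcases h with rfl | ⟨b, hb⟩
  · right; exact ⟨false, by rw [mul_one]; exact NF.ypow ε hεne⟩
  · cases hb with
    | ypow l hl =>
      have hyy : y ^ ε * y ^ l = y ^ (ε + l) := (zpow_add y ε l).symm
      by_cases hz : ε + l = 0
      · left; rw [hyy, hz, zpow_zero]
      · right; exact ⟨false, hyy ▸ NF.ypow (ε + l) hz⟩
    | xpow k hk =>
      right; exact ⟨false, NF.ycons ε hεne _ (NF.xpow k hk)⟩
    | ycons l hl w' hw' =>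
      have hyy : y ^ ε * (y ^ l * w') = y ^ (ε + l) * w' := by
        rw [← mul_assoc, ← zpow_add]
      by_cases hz : ε + l = 0
      · right
        refine ⟨true, ?_⟩
        rw [hyy, hz, zpow_zero, one_mul]
        exact hw'
      · right; exact ⟨false, hyy ▸ NF.ycons (ε + l) hz _ hw'⟩
    | xcons k hk w' hw' =>
      right; exact ⟨false, NF.ycons ε hεne _ (NF.xcons k hk w' hw')⟩

lemma list_prod_NF {x y : F2} : ∀ l : List F2,
    (∀ g ∈ l, g ∈ (({x, y} : Set F2) ∪ ({x, y} : Set F2)⁻¹)) →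
    (l.prod = 1 ∨ ∃ b, NF x y b l.prod) := by
  intro l
  induction l with
  | nil => intro _; left; simp
  | cons g t ih =>
    intro hl
    have hg := hl g (by simp)
    have ht : t.prod = 1 ∨ ∃ b, NF x y b t.prod := ih (fun z hz => hl z (by simp [hz]))
    rw [List.prod_cons]
    have hgx : g = x ∨ g = y ∨ g = x⁻¹ ∨ g = y⁻¹ := by
      rcases hg with h | h
      · rcases h with h | h
        · left; exact h
        · right; left; exact h
      · rw [Set.mem_inv] at h
        rcases h with h | h
        · right; right; left; rw [← inv_inv g, h]  -- g⁻¹ = x?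
        · right; right; right; rw [← inv_inv g, h]
    rcases hgx with rfl | rfl | rfl | rfl
    · simpa using NF_mul_x 1 (Or.inl rfl) t.prod ht
    · simpa using NF_mul_y 1 (Or.inl rfl) t.prod ht
    · simpa using NF_mul_x (-1) (Or.inr rfl) t.prod ht
    · simpa using NF_mul_y (-1) (Or.inr rfl) t.prod ht

lemma mem_closure_NF {x y : F2} {w : F2} (hw : w ∈ Subgroup.closure ({x, y} : Set F2)) :
    w = 1 ∨ ∃ b, NF x y b w := by
  have hw' : w ∈ Submonoid.closure (({x, y} : Set F2) ∪ ({x, y} : Set F2)⁻¹) := by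
    have := Subgroup.closure_toSubmonoid ({x, y} : Set F2)
    rw [← this]
    exact hw
  obtain ⟨l, hl, rfl⟩ := Submonoid.exists_list_of_mem_closure hw'
  exact list_prod_NF l hl

lemma NF_spec {x y : F2} {C : Ltr}
    (hX : ∀ k : ℤ, k ≠ 0 → x ^ k ≠ 1 ∧ (x ^ k).toWord.head? = some C ∧
      (x ^ k).toWord.getLast? = some (C.1, !C.2))
    (hY : ∀ l : ℤ, l ≠ 0 → y ^ l ≠ 1 ∧ (∀ p ∈ (y ^ l).toWord.head?, p ≠ C) ∧
      (∀ q ∈ (y ^ l).toWord.getLast?, q ≠ (C.1, !C.2))) :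
    ∀ {b w}, NF x y b w → w.toWord ≠ [] ∧
      (b = true → ((w.toWord.head? = some C) ∧ 2 ≤ w.toWord.length)) ∧
      (b = false → ((∀ p ∈ w.toWord.head?, p ≠ C) ∧
        ((∃ l : ℤ, w = y ^ l) ∨ 2 ≤ w.toWord.length))) := by
  intro b w h
  induction h with
  | xpow k hk =>
    obtain ⟨h1, h2, h3⟩ := hX k hk
    refine ⟨ne_one_iff.mp h1, fun _ => ⟨h2, two_le_len h2 h3 (self_ne_flip C)⟩, by simp⟩
  | ypow l hl =>
    obtain ⟨h1, h2, h3⟩ := hY l hl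
    exact ⟨ne_one_iff.mp h1, by simp, fun _ => ⟨h2, Or.inl ⟨l, rfl⟩⟩⟩
  | xcons k hk w' hw' ih =>
    obtain ⟨ihne, _, ihf⟩ := ih
    obtain ⟨ihhead, _⟩ := ihf rfl
    obtain ⟨h1, h2, h3⟩ := hX k hk
    have hw'1 : w' ≠ 1 := ne_one_iff.mpr ihne
    have hj : ∀ p ∈ (x ^ k).toWord.getLast?, ∀ q ∈ w'.toWord.head?, NC p q := by
      intro p hp q hq
      rw [Option.mem_def, h3, Option.some_inj] at hp
      subst hp
      intro hcon
      apply ihhead q hq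
      rw [hcon]
      exact (flip_flip C).symm ▸ rfl
    have hw := toWord_mul_junction h1 hw'1 hj
    have hxne : (x ^ k).toWord ≠ [] := ne_one_iff.mp h1
    refine ⟨by rw [hw]; simp [hxne], fun _ => ⟨?_, ?_⟩, by simp⟩
    · rw [hw, List.head?_append_of_ne_nil _ hxne, h2]
    · rw [hw, List.length_append]
      have := two_le_len h2 h3 (self_ne_flip C)
      omega
  | ycons l hl w' hw' ih =>
    obtain ⟨ihne, iht, _⟩ := ih
    obtain ⟨ihhead, ihlen⟩ := iht rfl
    obtain ⟨h1, h2, h3⟩ := hY l hl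
    have hw'1 : w' ≠ 1 := ne_one_iff.mpr ihne
    have hj : ∀ p ∈ (y ^ l).toWord.getLast?, ∀ q ∈ w'.toWord.head?, NC p q := by
      intro p hp q hq
      rw [Option.mem_def, ihhead, Option.some_inj] at hq
      subst hq
      intro hcon
      exact h3 p hp (flip_letter p C hcon)
    have hw := toWord_mul_junction h1 hw'1 hj
    have hyne : (y ^ l).toWord ≠ [] := ne_one_iff.mp h1
    refine ⟨by rw [hw]; simp [hyne], by simp, fun _ => ⟨?_, Or.inr ?_⟩⟩
    · rw [hw, List.head?_append_of_ne_nil _ hyne]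
      exact h2
    · rw [hw, List.length_append]
      omega

end CR

namespace CR

lemma basis_y_ne_one {x y : F2} (h : IsBasis x y) : y ≠ 1 := by
  obtain ⟨φ, _, hy⟩ := h
  rintro rfl
  have : gb = 1 := φ.injective (by rw [hy]; exact (_root_.map_one φ).symm)
  exact FreeGroup.of_ne_one (1 : Fin 2) this

lemma closure_top {x y : F2} (h : IsBasis x y) :
    Subgroup.closure ({x, y} : Set F2) = ⊤ := by
  obtain ⟨φ, hx, hy⟩ := h
  have h0 : Subgroup.closure ({ga, gb} : Set F2) = ⊤ := by
    apply top_unique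
    rw [← FreeGroup.closure_range_of (Fin 2)]
    apply Subgroup.closure_mono
    rintro z ⟨i, rfl⟩
    fin_cases i
    · left; rfl
    · right; rfl
  calc Subgroup.closure ({x, y} : Set F2)
      = Subgroup.closure ((φ : F2 →* F2) '' {ga, gb}) := by
        rw [Set.image_pair]
        have e1 : (φ : F2 →* F2) ga = x := hx
        have e2 : (φ : F2 →* F2) gb = y := hy
        rw [e1, e2]
    _ = Subgroup.map (φ : F2 →* F2) (Subgroup.closure {ga, gb}) :=
        (MonoidHom.map_closure _ _).symm
    _ = ⊤ := by rw [h0]; exact Subgroup.map_top_of_surjective _ φ.surjective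

lemma ga_mul_gb_ne : ga * gb ≠ gb * ga := by
  intro hcon
  have h1 : (ga * gb).toWord = [((0 : Fin 2), true), ((1 : Fin 2), true)] := by
    have e : ga * gb = FreeGroup.mk [((0 : Fin 2), true), ((1 : Fin 2), true)] := by
      rw [show ga = FreeGroup.mk [((0 : Fin 2), true)] from rfl,
        show gb = FreeGroup.mk [((1 : Fin 2), true)] from rfl, FreeGroup.mul_mk]
      rfl
    rw [e]
    exact toWord_mk_chain (List.isChain_cons_cons.mpr ⟨by simp [NC], List.isChain_singleton _⟩)
  have h2 : (gb * ga).toWord = [((1 : Fin 2), true), ((0 : Fin 2), true)] := by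
    have e : gb * ga = FreeGroup.mk [((1 : Fin 2), true), ((0 : Fin 2), true)] := by
      rw [show ga = FreeGroup.mk [((0 : Fin 2), true)] from rfl,
        show gb = FreeGroup.mk [((1 : Fin 2), true)] from rfl, FreeGroup.mul_mk]
      rfl
    rw [e]
    exact toWord_mk_chain (List.isChain_cons_cons.mpr ⟨by simp [NC], List.isChain_singleton _⟩)
  rw [hcon] at h1
  rw [h1] at h2
  simp at h2

/-- The key lemma: if `(x,y)` is a basis and `x` is not cyclically reduced,
with first letter `C` and last letter `C⁻¹`, then `y` starts with `C` or ends
with `C⁻¹`. -/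
lemma lemL {x y : F2} (h : IsBasis x y) {C : Ltr} (hxh : x.toWord.head? = some C)
    (hxl : x.toWord.getLast? = some (C.1, !C.2)) :
    y.toWord.head? = some C ∨ y.toWord.getLast? = some (C.1, !C.2) := by
  by_contra hcon
  push_neg at hcon
  obtain ⟨h1, h2⟩ := hcon
  have hxne : x ≠ 1 := by rintro rfl; rw [FreeGroup.toWord_one] at hxh; simp at hxh
  have hyne : y ≠ 1 := basis_y_ne_one h
  have hy1 : ∀ p ∈ y.toWord.head?, p ≠ C := by
    intro p hp hpc
    exact h1 (by rw [← hpc]; exact hp)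
  have hy2 : ∀ q ∈ y.toWord.getLast?, q ≠ (C.1, !C.2) := by
    intro q hq hqc
    exact h2 (by rw [← hqc]; exact hq)
  have hX := xsyl hxne hxh hxl
  have hY := ysyl hyne hy1 hy2
  have htop := closure_top h
  have hga : ga ∈ Subgroup.closure ({x, y} : Set F2) := by rw [htop]; trivial
  have hgb : gb ∈ Subgroup.closure ({x, y} : Set F2) := by rw [htop]; trivial
  have hgalen : ga.toWord.length = 1 := by
    rw [show ga = FreeGroup.of (0 : Fin 2) from rfl, FreeGroup.toWord_of]
    rfl
  have hgblen : gb.toWord.length = 1 := by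
    rw [show gb = FreeGroup.of (1 : Fin 2) from rfl, FreeGroup.toWord_of]
    rfl
  have hgap : ∃ m : ℤ, ga = y ^ m := by
    rcases mem_closure_NF hga with hh | ⟨b, hb⟩
    · exact absurd hh (FreeGroup.of_ne_one (0 : Fin 2))
    · have spec := NF_spec hX hY hb
      cases b
      · rcases (spec.2.2 rfl).2 with hpow | hlen
        · exact hpow
        · omega
      · have := (spec.2.1 rfl).2
        omega
  have hgbp : ∃ m : ℤ, gb = y ^ m := by
    rcases mem_closure_NF hgb with hh | ⟨b, hb⟩
    · exact absurd hh (FreeGroup.of_ne_one (1 : Fin 2))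
    · have spec := NF_spec hX hY hb
      cases b
      · rcases (spec.2.2 rfl).2 with hpow | hlen
        · exact hpow
        · omega
      · have := (spec.2.1 rfl).2
        omega
  obtain ⟨m, hm⟩ := hgap
  obtain ⟨n, hn⟩ := hgbp
  apply ga_mul_gb_ne
  rw [hm, hn, ← zpow_add, ← zpow_add, add_comm]

lemma step {x y : F2} (h : IsBasis x y) (hx : ¬ CyclicallyReduced x.toWord) :
    ∃ c : F2, (c⁻¹ * x * c).toWord.length + (c⁻¹ * y * c).toWord.length <
      x.toWord.length + y.toWord.length := by
  simp only [CyclicallyReduced] at hx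
  push_neg at hx
  obtain ⟨p, hp, q, hq, hpq⟩ := hx
  rw [Option.mem_def] at hp hq
  obtain ⟨mid, hdec, hmidw, hfac⟩ := strip hp hq hpq
  refine ⟨FreeGroup.mk [p], ?_⟩
  set c := FreeGroup.mk [p] with hcdef
  have hxlen : x.toWord.length = mid.length + 2 := by rw [hdec]; simp
  have hx1 : c⁻¹ * x * c = FreeGroup.mk mid := by rw [hfac]; group
  have hx1len : (c⁻¹ * x * c).toWord.length = mid.length := by rw [hx1, hmidw]
  have hclen : c.toWord.length = 1 := by rw [toWord_mk_singleton]; rfl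
  rcases lemL h hp (hpq ▸ hq) with hyh | hyl
  · -- y starts with p
    obtain ⟨t, hyt⟩ := List.head?_eq_some_iff.mp hyh
    have hytred : (FreeGroup.mk t).toWord = t := by
      have hct := chain'_toWord y
      rw [hyt] at hct
      exact toWord_mk_chain hct.tail
    have hyfac : y = c * FreeGroup.mk t := by
      conv_lhs => rw [← FreeGroup.mk_toWord (x := y), hyt]
      rw [FreeGroup.mul_mk]
      rfl
    have hy1 : c⁻¹ * y * c = FreeGroup.mk t * c := by rw [hyfac]; group
    have hy1len : (c⁻¹ * y * c).toWord.length ≤ t.length + 1 := by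
      rw [hy1]
      have := FreeGroup.norm_mul_le (FreeGroup.mk t) c
      have e1 : (FreeGroup.mk t).norm = t.length := by
        show (FreeGroup.mk t).toWord.length = t.length
        rw [hytred]
      have e2 : c.norm = 1 := hclen
      have e3 : (FreeGroup.mk t * c).norm = (FreeGroup.mk t * c).toWord.length := rfl
      omega
    have hylen : y.toWord.length = t.length + 1 := by rw [hyt]; simp
    omega
  · -- y ends with q
    have hyne_nil : y.toWord ≠ [] := by
      intro h0
      rw [h0] at hyl
      simp at hyl
    obtain ⟨s, hs⟩ : ∃ s, y.toWord.dropLast = s := ⟨_, rfl⟩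
    have hydec : y.toWord = s ++ [q] := by
      have h5 := List.dropLast_append_getLast hyne_nil
      have h6 := List.getLast?_eq_getLast hyne_nil
      rw [hyl] at h6
      have h7 : y.toWord.getLast hyne_nil = q := by
        rw [← Option.some_inj, ← h6, hpq]
      rw [← hs, ← h7]
      exact h5.symm
    have hsred : (FreeGroup.mk s).toWord = s := by
      apply toWord_mk_chain
      apply (chain'_toWord y).infix
      exact ⟨[], [q], by simp only [List.nil_append]; exact hydec.symm⟩
    have hcinv : FreeGroup.mk [q] = c⁻¹ := by
      rw [hcdef, FreeGroup.inv_mk]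
      congr 1
      simp [FreeGroup.invRev, hpq]
    have hyfac : y = FreeGroup.mk s * c⁻¹ := by
      conv_lhs => rw [← FreeGroup.mk_toWord (x := y), hydec]
      rw [← FreeGroup.mul_mk, hcinv]
    have hy1 : c⁻¹ * y * c = c⁻¹ * FreeGroup.mk s := by
      rw [hyfac]; group
    have hy1len : (c⁻¹ * y * c).toWord.length ≤ s.length + 1 := by
      rw [hy1]
      have := FreeGroup.norm_mul_le c⁻¹ (FreeGroup.mk s)
      have e1 : (FreeGroup.mk s).norm = s.length := by
        show (FreeGroup.mk s).toWord.length = _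
        rw [hsred]
      have e2 : (c⁻¹).norm = 1 := by rw [FreeGroup.norm_inv_eq]; exact hclen
      have e3 : (c⁻¹ * FreeGroup.mk s).norm =
        (c⁻¹ * FreeGroup.mk s).toWord.length := rfl
      omega
    have hylen : y.toWord.length = s.length + 1 := by
      conv_lhs => rw [hydec]
      simp
    omega

lemma basis_conj {x y : F2} (h : IsBasis x y) (g : F2) :
    IsBasis (g⁻¹ * x * g) (g⁻¹ * y * g) := by
  obtain ⟨φ, hx, hy⟩ := h
  refine ⟨φ.trans (MulAut.conj g⁻¹), ?_, ?_⟩ <;>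
    simp [MulEquiv.trans_apply, MulAut.conj_apply, hx, hy, mul_assoc]

lemma basis_swap {x y : F2} (h : IsBasis x y) : IsBasis y x := by
  obtain ⟨φ, hx, hy⟩ := h
  refine ⟨(FreeGroup.freeGroupCongr (Equiv.swap (0 : Fin 2) 1)).trans φ, ?_, ?_⟩
  · rw [MulEquiv.trans_apply, show ga = FreeGroup.of (0 : Fin 2) from rfl]
    simp [Equiv.swap_apply_left]
    exact hy
  · rw [MulEquiv.trans_apply, show gb = FreeGroup.of (1 : Fin 2) from rfl]
    simp [Equiv.swap_apply_right]
    exact hx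

end CR


/-- Every basis of `F₂` is conjugate (by a single element) to a basis in which both
entries are cyclically reduced. -/
theorem basis_conjugate_to_cyclically_reduced (x y : F2) (h : IsBasis x y) :
    ∃ g : F2, CyclicallyReduced (g⁻¹ * x * g).toWord ∧
      CyclicallyReduced (g⁻¹ * y * g).toWord ∧
      IsBasis (g⁻¹ * x * g) (g⁻¹ * y * g) := by
  suffices H : ∀ n : ℕ, ∀ x y : F2, x.toWord.length + y.toWord.length ≤ n → IsBasis x y →
      ∃ g : F2, CyclicallyReduced (g⁻¹ * x * g).toWord ∧
        CyclicallyReduced (g⁻¹ * y * g).toWord ∧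
        IsBasis (g⁻¹ * x * g) (g⁻¹ * y * g) by
    exact H _ x y le_rfl h
  intro n
  induction n using Nat.strong_induction_on with
  | _ n ih =>
    intro x y hlen hb
    by_cases hx : CyclicallyReduced x.toWord
    · by_cases hy : CyclicallyReduced y.toWord
      · exact ⟨1, by simpa using hx, by simpa using hy, by simpa using hb⟩
      · obtain ⟨c, hc⟩ := CR.step (CR.basis_swap hb) hy
        obtain ⟨g₀, H1, H2, H3⟩ := ih ((c⁻¹ * x * c).toWord.length + (c⁻¹ * y * c).toWord.length)
          (by omega) (c⁻¹ * x * c) (c⁻¹ * y * c) le_rfl (CR.basis_conj hb c)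
        have key : ∀ z : F2, (c * g₀)⁻¹ * z * (c * g₀) = g₀⁻¹ * (c⁻¹ * z * c) * g₀ := by
          intro z; group
        exact ⟨c * g₀, by rw [key]; exact H1, by rw [key]; exact H2,
          by rw [key x, key y]; exact H3⟩
    · obtain ⟨c, hc⟩ := CR.step hb hx
      obtain ⟨g₀, H1, H2, H3⟩ := ih ((c⁻¹ * x * c).toWord.length + (c⁻¹ * y * c).toWord.length)
        (by omega) (c⁻¹ * x * c) (c⁻¹ * y * c) le_rfl (CR.basis_conj hb c)
      have key : ∀ z : F2, (c * g₀)⁻¹ * z * (c * g₀) = g₀⁻¹ * (c⁻¹ * z * c) * g₀ := by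
        intro z; group
      exact ⟨c * g₀, by rw [key]; exact H1, by rw [key]; exact H2,
        by rw [key x, key y]; exact H3⟩
end
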